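/- arXiv:2307.07107 — 4 statements merged into one kernel-verified Lean document; each statement's English description precedes it below -/
import Mathlib

section
/- Let G be a finite simple graph and (i,j) an edge of G whose endpoint degrees satisfy d_i ≥ d_j. Then the triangle-only balanced Forman curvature satisfies Ric₀_G(i,j) − Ric₀_{G^{+VN}}(i,j) ≤ 1/(d_j² + d_j) − 2(d_i − d_j)/(d_i² + d_i). -/
open Finset

attribute [local instance] Classical.propDecidable

variable {V : Type*} [Fintype V] [DecidableEq V]

/-- The virtual-node graph `G^{+VN}`: vertex set `V ∪ {v*}` (here `Option V`, with `none`
playing the role of the virtual node `v*`), original adjacency on `V`, and the virtual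
node adjacent to every original vertex. -/
def addVN (G : SimpleGraph V) : SimpleGraph (Option V) where
  Adj u v :=
    match u, v with
    | some a, some b => G.Adj a b
    | some _, none => True
    | none, some _ => True
    | none, none => False
  symm := by
    constructor
    intro u v h
    cases u <;> cases v <;> simp_all
    exact G.adj_symm h
  loopless := by
    constructor
    intro u h
    cases u <;> simp_all

/-- `#Δ(i,j)`: number of triangles containing the edge `(i,j)`, i.e. common neighbors. -/
noncomputable def triCount (G : SimpleGraph V) (i j : V) : ℕ :=
  (G.neighborFinset i ∩ G.neighborFinset j).card

/-- `#□^i(i,j)`: number of diagonal-free 4-cycles based at the edge `(i,j)`, seen from `i`. -/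
noncomputable def sqCount (G : SimpleGraph V) (i j : V) : ℕ :=
  ((G.neighborFinset i).filter (fun k => k ≠ j ∧ ¬ G.Adj k j ∧
    ∃ w, G.Adj w k ∧ G.Adj w j ∧ w ≠ i ∧ ¬ G.Adj w i)).card

/-- The diagonal-free 4-cycles based at the edge `(i,j)`, as pairs `(k, w)`. -/
noncomputable def fourCycles (G : SimpleGraph V) (i j : V) : Finset (V × V) :=
  Finset.univ.filter (fun p => G.Adj i p.1 ∧ p.1 ≠ j ∧ ¬ G.Adj p.1 j ∧
    G.Adj p.2 p.1 ∧ G.Adj p.2 j ∧ p.2 ≠ i ∧ ¬ G.Adj p.2 i)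

/-- `γ_max(i,j)`: maximum over nodes `k` of the number of diagonal-free 4-cycles based at
`(i,j)` passing through `k`. -/
noncomputable def gammaMax (G : SimpleGraph V) (i j : V) : ℕ :=
  Finset.univ.sup (fun x => ((fourCycles G i j).filter (fun p => p.1 = x ∨ p.2 = x)).card)

/-- The balanced Forman curvature of the edge `(i,j)`. -/
noncomputable def Ric (G : SimpleGraph V) (i j : V) : ℝ :=
  2 / (G.degree i : ℝ) + 2 / (G.degree j : ℝ) - 2
    + (triCount G i j : ℝ) *
        (2 / (max (G.degree i) (G.degree j) : ℝ) + 1 / (min (G.degree i) (G.degree j) : ℝ))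
    + ((gammaMax G i j : ℝ) / (max (G.degree i) (G.degree j) : ℝ)) *
        ((sqCount G i j : ℝ) + (sqCount G j i : ℝ))

/-- The triangle-only balanced Forman curvature `Ric₀` of the edge `(i,j)`. -/
noncomputable def Ric₀ (G : SimpleGraph V) (i j : V) : ℝ :=
  2 / (G.degree i : ℝ) + 2 / (G.degree j : ℝ) - 2
    + (triCount G i j : ℝ) *
        (2 / (max (G.degree i) (G.degree j) : ℝ) + 1 / (min (G.degree i) (G.degree j) : ℝ))


lemma addVN_nbr (G : SimpleGraph V) (i : V) :
    (addVN G).neighborFinset (some i) = insert none ((G.neighborFinset i).image some) := by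
  ext x
  cases x <;> simp only [SimpleGraph.mem_neighborFinset] <;> simp [addVN]

lemma addVN_degree (G : SimpleGraph V) (i : V) :
    (addVN G).degree (some i) = G.degree i + 1 := by
  rw [← SimpleGraph.card_neighborFinset_eq_degree, addVN_nbr,
    Finset.card_insert_of_notMem (by simp),
    Finset.card_image_of_injective _ (Option.some_injective V),
    SimpleGraph.card_neighborFinset_eq_degree]

lemma addVN_tri (G : SimpleGraph V) (i j : V) :
    triCount (addVN G) (some i) (some j) = triCount G i j + 1 := by
  unfold triCount
  have : (addVN G).neighborFinset (some i) ∩ (addVN G).neighborFinset (some j)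
      = insert none ((G.neighborFinset i ∩ G.neighborFinset j).image some) := by
    rw [addVN_nbr, addVN_nbr]
    ext x
    cases x <;> simp
  rw [this, Finset.card_insert_of_notMem (by simp),
    Finset.card_image_of_injective _ (Option.some_injective V)]

lemma tri_lt (G : SimpleGraph V) (i j : V) (hij : G.Adj i j) :
    triCount G i j < G.degree j := by
  rw [← SimpleGraph.card_neighborFinset_eq_degree]
  apply Finset.card_lt_card
  constructor
  · exact Finset.inter_subset_right
  · intro h
    have : i ∈ G.neighborFinset i ∩ G.neighborFinset j := h (by simp [hij, hij.symm])
    simp at this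

lemma key_ineq (a b t : ℝ) (hb : 1 ≤ b) (hab : b ≤ a) (ht : t + 1 ≤ b) :
    2/a + 2/b - 2 + t*(2/a + 1/b)
      - (2/(a+1) + 2/(b+1) - 2 + (t+1)*(2/(a+1) + 1/(b+1)))
    ≤ 1/(b^2+b) - 2*(a-b)/(a^2+a) := by
  have ha0 : (0:ℝ) < a := by linarith
  have hb0 : (0:ℝ) < b := by linarith
  have ha1 : (0:ℝ) < a + 1 := by linarith
  have hb1 : (0:ℝ) < b + 1 := by linarith
  have haa : (0:ℝ) < a^2 + a := by nlinarith
  have hbb : (0:ℝ) < b^2 + b := by nlinarith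
  have hX : (0:ℝ) ≤ 2/(a^2+a) + 1/(b^2+b) := by positivity
  have heq : 2/a + 2/b - 2 + t*(2/a + 1/b)
      - (2/(a+1) + 2/(b+1) - 2 + (t+1)*(2/(a+1) + 1/(b+1)))
      - (1/(b^2+b) - 2*(a-b)/(a^2+a))
      = (t + 1 - b) * (2/(a^2+a) + 1/(b^2+b)) := by
    field_simp
    ring
  nlinarith [mul_nonpos_of_nonpos_of_nonneg (by linarith : t + 1 - b ≤ 0) hX]

/-- For an edge `(i,j)` of a finite simple graph `G` with `d_i ≥ d_j`,
the triangle-only balanced Forman curvature satisfies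
`Ric₀_G(i,j) − Ric₀_{G^{+VN}}(i,j) ≤ 1/(d_j² + d_j) − 2(d_i − d_j)/(d_i² + d_i)`. -/
theorem stmt_1 (G : SimpleGraph V) (i j : V) (hij : G.Adj i j)
    (hd : G.degree j ≤ G.degree i) :
    Ric₀ G i j - Ric₀ (addVN G) (some i) (some j)
      ≤ 1 / ((G.degree j : ℝ) ^ 2 + (G.degree j : ℝ))
        - 2 * ((G.degree i : ℝ) - (G.degree j : ℝ)) / ((G.degree i : ℝ) ^ 2 + (G.degree i : ℝ)) := by
  have hb : 1 ≤ G.degree j := (G.degree_pos_iff_exists_adj j).2 ⟨i, hij.symm⟩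
  have htri : triCount G i j + 1 ≤ G.degree j := tri_lt G i j hij
  unfold Ric₀
  rw [addVN_degree, addVN_degree, addVN_tri]
  have hdr : (G.degree j : ℝ) ≤ (G.degree i : ℝ) := by exact_mod_cast hd
  push_cast
  rw [max_eq_left hdr, min_eq_right hdr,
    max_eq_left (by linarith : (G.degree j : ℝ) + 1 ≤ (G.degree i : ℝ) + 1),
    min_eq_right (by linarith : (G.degree j : ℝ) + 1 ≤ (G.degree i : ℝ) + 1)]
  exact key_ineq _ _ _ (by exact_mod_cast hb) (by exact_mod_cast hd) (by exact_mod_cast htri)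
end

section
/- For all real numbers a ≥ b ≥ 1 and every real x with 0 ≤ x ≤ b − 1, we have 2(1/a + 1/b − 1/(a+1) − 1/(b+1)) + x(2/a + 1/b) − (x+1)(2/(a+1) + 1/(b+1)) ≤ 1/(b² + b) − 2(a − b)/(a² + a). -/
/-- The algebraic inequality underlying the virtual-node curvature
proposition: for `a ≥ b ≥ 1` and `0 ≤ x ≤ b − 1`, the curvature-difference expression is
bounded by `1/(b² + b) − 2(a − b)/(a² + a)`. -/
theorem stmt_8 (a b x : ℝ) (hab : b ≤ a) (hb : 1 ≤ b) (hx0 : 0 ≤ x) (hx1 : x ≤ b - 1) :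
    2 * (1 / a + 1 / b - 1 / (a + 1) - 1 / (b + 1))
      + x * (2 / a + 1 / b) - (x + 1) * (2 / (a + 1) + 1 / (b + 1))
      ≤ 1 / (b ^ 2 + b) - 2 * (a - b) / (a ^ 2 + a) := by
  have ha : (1:ℝ) ≤ a := hb.trans hab
  have ha0 : (0:ℝ) < a := by linarith
  have hb0 : (0:ℝ) < b := by linarith
  have ha1 : (0:ℝ) < a + 1 := by linarith
  have hb1 : (0:ℝ) < b + 1 := by linarith
  have key : 2 * (1 / a + 1 / b - 1 / (a + 1) - 1 / (b + 1))
      + x * (2 / a + 1 / b) - (x + 1) * (2 / (a + 1) + 1 / (b + 1))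
      ≤ 2 * (1 / a + 1 / b - 1 / (a + 1) - 1 / (b + 1))
      + (b-1) * (2 / a + 1 / b) - ((b-1) + 1) * (2 / (a + 1) + 1 / (b + 1)) := by
    have h1 : 2 / a + 1 / b - (2 / (a + 1) + 1 / (b + 1)) ≥ 0 := by
      have : 2/a ≥ 2/(a+1) := by gcongr <;> linarith
      have : 1/b ≥ 1/(b+1) := by gcongr <;> linarith
      linarith [div_le_div_of_nonneg_left (by norm_num : (0:ℝ) ≤ 2) ha0 (by linarith : a ≤ a+1)]
    nlinarith [mul_nonneg (sub_nonneg.2 hx1) h1]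
  have eq2 : 2 * (1 / a + 1 / b - 1 / (a + 1) - 1 / (b + 1))
      + (b-1) * (2 / a + 1 / b) - ((b-1) + 1) * (2 / (a + 1) + 1 / (b + 1))
      = 1 / (b ^ 2 + b) - 2 * (a - b) / (a ^ 2 + a) := by
    field_simp
    ring
  linarith [key, eq2.le]
end

section
/- Let a ≥ b be natural numbers with b ≥ 2, a > b, and a − b ≤ b. Then 1/(b² + b) − 2(a − b)/(a² + a) ≤ 0, with equality if and only if (a, b) = (3, 2). -/
/-- For natural numbers `a > b ≥ 2` with degree gap `a − b ≤ b`, the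
curvature-decrease upper bound `1/(b² + b) − 2(a − b)/(a² + a)` is nonpositive, with
equality exactly when `(a, b) = (3, 2)`. -/
theorem stmt_9 (a b : ℕ) (hb : 2 ≤ b) (hab : b < a) (hd : a - b ≤ b) :
    (1 / ((b : ℝ) ^ 2 + (b : ℝ)) - 2 * ((a : ℝ) - (b : ℝ)) / ((a : ℝ) ^ 2 + (a : ℝ)) ≤ 0) ∧
    (1 / ((b : ℝ) ^ 2 + (b : ℝ)) - 2 * ((a : ℝ) - (b : ℝ)) / ((a : ℝ) ^ 2 + (a : ℝ)) = 0
      ↔ a = 3 ∧ b = 2) := by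
  have hbR : (2:ℝ) ≤ (b:ℝ) := by exact_mod_cast hb
  have haR : (b:ℝ) + 1 ≤ (a:ℝ) := by exact_mod_cast hab
  have ha2bN : a ≤ 2 * b := by omega
  have ha2b : (a:ℝ) ≤ 2 * (b:ℝ) := by exact_mod_cast ha2bN
  have hBpos : (0:ℝ) < (b:ℝ)^2 + b := by nlinarith
  have hApos : (0:ℝ) < (a:ℝ)^2 + a := by nlinarith
  have hp : (0:ℝ) ≤ (a:ℝ) - (b:ℝ) - 1 := by linarith
  have hq : (0:ℝ) ≤ 2*(b:ℝ)^2 - ((a:ℝ) - (b:ℝ) - 1) - 3 := by nlinarith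
  have key : (a:ℝ)^2 + a ≤ 2*((a:ℝ)-b)*((b:ℝ)^2+b) := by
    nlinarith [mul_nonneg hp hq, mul_nonneg (by linarith : (0:ℝ) ≤ (b:ℝ) - 2)
      (by linarith : (0:ℝ) ≤ (b:ℝ) + 1)]
  constructor
  · rw [sub_nonpos, div_le_div_iff₀ hBpos hApos]
    nlinarith [key]
  · constructor
    · intro h
      rw [sub_eq_zero, div_eq_div_iff hBpos.ne' hApos.ne'] at h
      have heq : (a:ℝ)^2 + a = 2*((a:ℝ)-b)*((b:ℝ)^2+b) := by nlinarith [h]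
      have ha1 : a = b + 1 := by
        by_contra hne
        have h2 : b + 2 ≤ a := by omega
        have h2R : (b:ℝ) + 2 ≤ (a:ℝ) := by exact_mod_cast h2
        nlinarith
      subst ha1
      have hbR2 : (b:ℝ) = 2 := by
        push_cast at heq
        nlinarith
      have : b = 2 := by exact_mod_cast hbR2
      exact ⟨by omega, this⟩
    · rintro ⟨ha, hb'⟩
      subst ha; subst hb'
      norm_num
end

section
/- Let G = (V,E) be a finite simple graph with |V| ≥ 2. Then the Cheeger constant of the virtual-node graph satisfies h(G^{+VN}) ≥ min{h(G) + 1, 1}; in particular, if h(G) < 1 then h(G^{+VN}) > h(G), i.e., adding the virtual node increases the Cheeger constant. -/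
open Finset

attribute [local instance] Classical.propDecidable

variable {V : Type*} [Fintype V] [DecidableEq V]

/-- The edge boundary `∂S`: the set of edges of `G` with exactly one endpoint in `S`. -/
noncomputable def edgeBoundary (G : SimpleGraph V) (S : Finset V) : Finset (Sym2 V) :=
  G.edgeFinset.filter (fun e => ∃ u v, e = s(u, v) ∧ u ∈ S ∧ v ∉ S)

/-- The Cheeger constant `h(G) = min{|∂S|/|S| : ∅ ≠ S ⊆ V, 2|S| ≤ |V|}`. -/
noncomputable def cheeger (G : SimpleGraph V) : ℝ :=
  sInf {x : ℝ | ∃ S : Finset V, S.Nonempty ∧ 2 * S.card ≤ Fintype.card V ∧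
    x = ((edgeBoundary G S).card : ℝ) / (S.card : ℝ)}

lemma bnd_card (G : SimpleGraph V) (T : Finset (Option V))
    (hcard : 2 * T.card ≤ Fintype.card (Option V)) :
    T.card ≤ (edgeBoundary (addVN G) T).card := by
  by_cases hn : (none : Option V) ∈ T
  · have h1 : Tᶜ.card ≤ (edgeBoundary (addVN G) T).card := by
      apply Finset.card_le_card_of_injOn (fun u => s(u, none))
      · intro u hu
        simp only [Finset.mem_coe, Finset.mem_compl] at hu
        obtain ⟨a, rfl⟩ : ∃ a, u = some a := by
          cases u with
          | none => exact absurd hn hu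
          | some a => exact ⟨a, rfl⟩
        simp only [Finset.mem_coe, edgeBoundary, Finset.mem_filter, SimpleGraph.mem_edgeFinset,
          SimpleGraph.mem_edgeSet]
        exact ⟨trivial, none, some a, Sym2.eq_swap, hn, hu⟩
      · intro u hu u' hu' h
        rcases Sym2.eq_iff.mp h with ⟨h1, _⟩ | ⟨h1, h2⟩
        · exact h1
        · rw [h1, ← h2]
    have h2 : Tᶜ.card = Fintype.card (Option V) - T.card := Finset.card_compl T
    omega
  · apply Finset.card_le_card_of_injOn (fun u => s(u, none))
    · intro u hu
      obtain ⟨a, rfl⟩ : ∃ a, u = some a := by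
        cases u with
        | none => exact absurd hu hn
        | some a => exact ⟨a, rfl⟩
      simp only [Finset.mem_coe, edgeBoundary, Finset.mem_filter, SimpleGraph.mem_edgeFinset,
        SimpleGraph.mem_edgeSet]
      exact ⟨trivial, some a, none, rfl, hu, hn⟩
    · intro u hu u' hu' h
      rcases Sym2.eq_iff.mp h with ⟨h1, _⟩ | ⟨h1, h2⟩
      · exact h1
      · rw [h1, ← h2]

/-- For a finite simple graph `G` with `|V| ≥ 2`, the Cheeger constant of
the virtual-node graph satisfies `h(G^{+VN}) ≥ min{h(G) + 1, 1}`; in particular, if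
`h(G) < 1` then adding the virtual node increases the Cheeger constant. -/
theorem stmt_12 (G : SimpleGraph V) (hV : 2 ≤ Fintype.card V) :
    min (cheeger G + 1) 1 ≤ cheeger (addVN G) ∧
    (cheeger G < 1 → cheeger G < cheeger (addVN G)) := by
  have hne : Nonempty V := Fintype.card_pos_iff.mp (by omega)
  obtain ⟨v⟩ := hne
  have key : (1 : ℝ) ≤ cheeger (addVN G) := by
    apply le_csInf
    · refine ⟨_, {some v}, ⟨v, by simp⟩, ?_, rfl⟩
      simp [Fintype.card_option]
      omega
    · rintro x ⟨T, hT, hcard, rfl⟩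
      have hb := bnd_card G T hcard
      have hc : (0 : ℝ) < T.card := by exact_mod_cast hT.card_pos
      rw [le_div_iff₀ hc, one_mul]
      exact_mod_cast hb
  refine ⟨le_trans (min_le_right _ _) key, fun h1 => lt_of_lt_of_le h1 key⟩
end
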